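/- Let A be a real polynomial of degree k ≥ 3 with leading coefficient a0, let B be any real polynomial, let λ ∈ ℝ, and fix y0 ∈ ℝ. Then the function x ↦ E(A,B,λ)(x,y0) is a polynomial function of x of degree exactly 2k−2, whose coefficient of x^{2k−2} equals (k·(k−2)²·(2k−3)/2)·a0². -/

import Mathlib

/-- The orthotoric expression `E(A,B,λ)(x,y)` associated to profile functions
`A, B : ℝ → ℝ` and a real parameter `λ`:  it equals `(x-y)⁴` times the operator `𝒮`
of the Bismut-Ricci-flat equation evaluated on the orthotoric Kähler ansatz. -/
noncomputable def orthoE (A B : ℝ → ℝ) (lam : ℝ) (x y : ℝ) : ℝ :=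
  ((x - y) ^ 2 / 2) *
      (deriv (fun t => A t * deriv^[3] A t) x + deriv (fun t => B t * deriv^[3] B t) y +
        deriv^[2] A x * deriv^[2] B y) -
    (x - y) *
      (A x * deriv^[3] A x - B y * deriv^[3] B y + deriv A x * deriv^[2] B y -
        deriv B y * deriv^[2] A x) +
    (A x + B y) * (deriv^[2] A x + deriv^[2] B y) -
    (1 / 2) * (deriv A x + deriv B y) ^ 2 - 2 * lam ^ 2

open Polynomial in
private lemma iter_deriv_eval' (p : Polynomial ℝ) (n : ℕ) :
    deriv^[n] (fun x => p.eval x) = fun x => (derivative^[n] p).eval x := by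
  induction n with
  | zero => rfl
  | succ n ih =>
    rw [Function.iterate_succ_apply', Function.iterate_succ_apply', ih]
    funext x
    exact (derivative^[n] p).deriv

open Polynomial in
theorem stmt_2 (A B : Polynomial ℝ) (k : ℕ) (hk : 3 ≤ k)
    (hdeg : A.natDegree = k) (a0 : ℝ) (ha0 : a0 = A.leadingCoeff)
    (lam y0 : ℝ) :
    ∃ P : Polynomial ℝ,
      (∀ x : ℝ, orthoE (fun x => A.eval x) (fun y => B.eval y) lam x y0 = P.eval x) ∧
      P.natDegree = 2 * k - 2 ∧
      P.coeff (2 * k - 2)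
        = ((k : ℝ) * ((k : ℝ) - 2) ^ 2 * (2 * (k : ℝ) - 3) / 2) * a0 ^ 2 := by
  set A1 := derivative A with hA1def
  set A2 := derivative A1 with hA2def
  set A3 := derivative A2 with hA3def
  set M := derivative (A * A3) with hMdef
  set b0 : ℝ := B.eval y0
  set b1 : ℝ := (derivative B).eval y0
  set b2 : ℝ := (derivative (derivative B)).eval y0
  set b3 : ℝ := (derivative (derivative (derivative B))).eval y0
  set cB : ℝ := (derivative (B * derivative^[3] B)).eval y0
  set Q1 : Polynomial ℝ := M + C cB + C b2 * A2 with hQ1def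
  set Q2 : Polynomial ℝ := A * A3 - C (b0 * b3) + C b2 * A1 - C b1 * A2 with hQ2def
  set P : Polynomial ℝ :=
    C (1/2 : ℝ) * ((X - C y0) ^ 2 * Q1)
      - (X - C y0) * Q2
      + (A + C b0) * (A2 + C b2)
      - C (1/2 : ℝ) * (A1 + C b1) ^ 2
      - C (2 * lam ^ 2) with hPdef
  -- basic facts
  have hAne : A ≠ 0 := fun h => by simp [h] at hdeg; omega
  have ha0ne : a0 ≠ 0 := ha0 ▸ leadingCoeff_ne_zero.mpr hAne
  have ha0c : A.coeff k = a0 := by rw [ha0, leadingCoeff, hdeg]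
  have hdA1 : A1.natDegree ≤ k - 1 := by
    have h := natDegree_derivative_le A; rw [hdeg] at h; exact h
  have hdA2 : A2.natDegree ≤ k - 2 := by
    have h := natDegree_derivative_le A1; rw [← hA2def] at h; omega
  have hdA3 : A3.natDegree ≤ k - 3 := by
    have h := natDegree_derivative_le A2; rw [← hA3def] at h; omega
  have hdAA3 : (A * A3).natDegree ≤ 2 * k - 3 := by
    have := natDegree_mul_le (p := A) (q := A3); omega
  have hdM : M.natDegree ≤ 2 * k - 4 := by
    have h := natDegree_derivative_le (A * A3); rw [← hMdef] at h; omega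
  have hdQ1 : Q1.natDegree ≤ 2 * k - 4 := by
    refine (natDegree_add_le _ _).trans (max_le ((natDegree_add_le _ _).trans
      (max_le hdM (by simp))) ?_)
    have := natDegree_mul_le (p := (C b2 : ℝ[X])) (q := A2)
    have := natDegree_C b2; omega
  have hdQ2 : Q2.natDegree ≤ 2 * k - 3 := by
    have h1 := natDegree_mul_le (p := (C b2 : ℝ[X])) (q := A1)
    have h2 := natDegree_mul_le (p := (C b1 : ℝ[X])) (q := A2)
    have h3 := natDegree_C b2; have h4 := natDegree_C b1
    refine (natDegree_sub_le _ _).trans (max_le ((natDegree_add_le _ _).trans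
      (max_le ((natDegree_sub_le _ _).trans (max_le hdAA3 ((natDegree_C _).le.trans (Nat.zero_le _)))) (by omega))) (by omega))
  -- coefficient values
  have cA1 : A1.coeff (k - 1) = a0 * k := by
    rw [hA1def, coeff_derivative, show k - 1 + 1 = k from by omega, ha0c,
      Nat.cast_sub (show 1 ≤ k from by omega)]
    push_cast; ring
  have cA2 : A2.coeff (k - 2) = a0 * k * ((k : ℝ) - 1) := by
    rw [hA2def, coeff_derivative, show k - 2 + 1 = k - 1 from by omega, cA1,
      Nat.cast_sub (show 2 ≤ k from by omega)]
    push_cast; ring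
  have cA3 : A3.coeff (k - 3) = a0 * k * ((k : ℝ) - 1) * ((k : ℝ) - 2) := by
    rw [hA3def, coeff_derivative, show k - 3 + 1 = k - 2 from by omega, cA2,
      Nat.cast_sub (show 3 ≤ k from hk)]
    push_cast; ring
  have cAA3 : (A * A3).coeff (2 * k - 3)
      = a0 * (a0 * k * ((k : ℝ) - 1) * ((k : ℝ) - 2)) := by
    rw [show 2 * k - 3 = k + (k - 3) from by omega,
      coeff_mul_add_eq_of_natDegree_le hdeg.le hdA3, ha0c, cA3]
  have cM : M.coeff (2 * k - 4)
      = a0 * (a0 * k * ((k : ℝ) - 1) * ((k : ℝ) - 2)) * (2 * (k : ℝ) - 3) := by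
    rw [hMdef, coeff_derivative, show 2 * k - 4 + 1 = 2 * k - 3 from by omega, cAA3,
      Nat.cast_sub (show 4 ≤ 2 * k from by omega)]
    push_cast; ring
  have hX2 : ((X - C y0 : ℝ[X]) ^ 2).natDegree ≤ 2 := by
    simp [natDegree_pow, natDegree_X_sub_C]
  have cX2 : ((X - C y0 : ℝ[X]) ^ 2).coeff 2 = 1 := by
    have hm : ((X - C y0 : ℝ[X]) ^ 2).Monic := (monic_X_sub_C y0).pow 2
    have hd : ((X - C y0 : ℝ[X]) ^ 2).natDegree = 2 := by
      simp [natDegree_pow, natDegree_X_sub_C]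
    simpa [hd] using hm.coeff_natDegree
  have cQ1 : Q1.coeff (2 * k - 4) = M.coeff (2 * k - 4) := by
    rw [hQ1def]
    simp only [coeff_add, coeff_C_mul]
    rw [coeff_C, if_neg (by omega),
      coeff_eq_zero_of_natDegree_lt (lt_of_le_of_lt hdA2 (by omega))]
    ring
  have cQ2 : Q2.coeff (2 * k - 3) = (A * A3).coeff (2 * k - 3) := by
    rw [hQ2def]
    simp only [coeff_add, coeff_sub, coeff_C_mul]
    rw [coeff_C, if_neg (by omega),
      coeff_eq_zero_of_natDegree_lt (lt_of_le_of_lt hdA1 (by omega : k - 1 < 2 * k - 3)),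
      coeff_eq_zero_of_natDegree_lt (lt_of_le_of_lt hdA2 (by omega : k - 2 < 2 * k - 3))]
    ring
  have hApb : (A + C b0).natDegree ≤ k := by
    refine (natDegree_add_le _ _).trans (max_le hdeg.le (by simp))
  have hA2pb : (A2 + C b2).natDegree ≤ k - 2 := by
    refine (natDegree_add_le _ _).trans (max_le hdA2 (by simp))
  have hA1pb : (A1 + C b1).natDegree ≤ k - 1 := by
    refine (natDegree_add_le _ _).trans (max_le hdA1 (by simp))
  have key : P.coeff (2 * k - 2)
      = ((k : ℝ) * ((k : ℝ) - 2) ^ 2 * (2 * (k : ℝ) - 3) / 2) * a0 ^ 2 := by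
    have e1 : ((X - C y0) ^ 2 * Q1).coeff (2 * k - 2)
        = ((X - C y0 : ℝ[X]) ^ 2).coeff 2 * Q1.coeff (2 * k - 4) := by
      rw [show 2 * k - 2 = 2 + (2 * k - 4) from by omega]
      exact coeff_mul_add_eq_of_natDegree_le hX2 hdQ1
    have e2 : ((X - C y0) * Q2).coeff (2 * k - 2)
        = (X - C y0 : ℝ[X]).coeff 1 * Q2.coeff (2 * k - 3) := by
      rw [show 2 * k - 2 = 1 + (2 * k - 3) from by omega]
      exact coeff_mul_add_eq_of_natDegree_le (natDegree_X_sub_C y0).le hdQ2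
    have e3 : ((A + C b0) * (A2 + C b2)).coeff (2 * k - 2)
        = (A + C b0).coeff k * (A2 + C b2).coeff (k - 2) := by
      rw [show 2 * k - 2 = k + (k - 2) from by omega]
      exact coeff_mul_add_eq_of_natDegree_le hApb hA2pb
    have e4 : ((A1 + C b1) ^ 2).coeff (2 * k - 2)
        = (A1 + C b1).coeff (k - 1) * (A1 + C b1).coeff (k - 1) := by
      rw [sq, show 2 * k - 2 = (k - 1) + (k - 1) from by omega]
      exact coeff_mul_add_eq_of_natDegree_le hA1pb hA1pb
    rw [hPdef]
    simp only [coeff_add, coeff_sub, coeff_C_mul]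
    rw [e1, e2, e3, e4]
    simp only [coeff_add]
    have h1 : (X - C y0 : ℝ[X]).coeff 1 = 1 := by simp
    rw [cX2, cQ1, cM, cQ2, cAA3, cA1, cA2, ha0c]
    simp only [coeff_C, if_neg (show ¬ (2 * k - 2 = 0) from by omega),
      if_neg (show ¬ (k = 0) from by omega), if_neg (show ¬ (k - 2 = 0) from by omega),
      if_neg (show ¬ (k - 1 = 0) from by omega), h1]
    ring
  have hne : ((k : ℝ) * ((k : ℝ) - 2) ^ 2 * (2 * (k : ℝ) - 3) / 2) * a0 ^ 2 ≠ 0 := by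
    have hkr : (3 : ℝ) ≤ (k : ℝ) := by exact_mod_cast hk
    have hpos : (0 : ℝ) < (k : ℝ) * ((k : ℝ) - 2) ^ 2 * (2 * (k : ℝ) - 3) / 2 := by
      apply div_pos _ two_pos
      apply mul_pos (mul_pos (by linarith) (pow_pos (by linarith) 2)) (by linarith)
    exact mul_ne_zero hpos.ne' (pow_ne_zero 2 ha0ne)
  have hPle : P.natDegree ≤ 2 * k - 2 := by
    have t1 : (C (1/2 : ℝ) * ((X - C y0) ^ 2 * Q1)).natDegree ≤ 2 * k - 2 := by
      refine natDegree_mul_le.trans ?_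
      have h2 := natDegree_mul_le (p := (X - C y0 : ℝ[X]) ^ 2) (q := Q1)
      have h3 := natDegree_C (1/2 : ℝ)
      omega
    have t2 : ((X - C y0) * Q2).natDegree ≤ 2 * k - 2 := by
      refine natDegree_mul_le.trans ?_
      have h2 := natDegree_X_sub_C (R := ℝ) y0
      omega
    have t3 : ((A + C b0) * (A2 + C b2)).natDegree ≤ 2 * k - 2 := by
      refine natDegree_mul_le.trans ?_; omega
    have t4 : (C (1/2 : ℝ) * (A1 + C b1) ^ 2).natDegree ≤ 2 * k - 2 := by
      refine natDegree_mul_le.trans ?_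
      have h2 := natDegree_pow_le (p := A1 + C b1) (n := 2)
      have h3 := natDegree_C (1/2 : ℝ)
      omega
    rw [hPdef]
    refine (natDegree_sub_le _ _).trans (max_le ((natDegree_sub_le _ _).trans
      (max_le ((natDegree_add_le _ _).trans (max_le ((natDegree_sub_le _ _).trans
        (max_le t1 t2)) t3)) t4)) ((natDegree_C _).le.trans (Nat.zero_le _)))
  refine ⟨P, ?_, ?_, ?_⟩
  · -- eval equality
    intro x
    have hAA3 : deriv (fun t => eval t A * eval t (derivative (derivative (derivative A)))) x
        = eval x M := by
      rw [show (fun t => eval t A * eval t (derivative (derivative (derivative A))))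
          = fun t => (A * A3).eval t by funext t; simp [hA3def, hA2def, hA1def]]
      exact (A * A3).deriv
    have hBB3 : deriv (fun t => eval t B * eval t (derivative (derivative (derivative B)))) y0
        = cB := by
      rw [show (fun t => eval t B * eval t (derivative (derivative (derivative B))))
          = fun t => (B * derivative^[3] B).eval t by
        funext t
        simp [Function.iterate_succ, Function.iterate_zero, Function.comp_apply]]
      exact (B * derivative^[3] B).deriv
    simp only [orthoE, iter_deriv_eval', Function.iterate_succ, Function.iterate_zero,
      Function.comp_apply, id_eq]
    rw [hAA3, hBB3]
    simp only [Polynomial.deriv, hPdef, hQ1def, hQ2def, hA3def, hA2def, hA1def,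
      eval_add, eval_sub, eval_mul, eval_pow, eval_C, eval_X]
    ring
  · exact le_antisymm hPle (le_natDegree_of_ne_zero (by rw [key]; exact hne))
  · exact key
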